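/- Let M be the differential operator M(y) = (x²−1)y'' + (x − 2p(x²−1))y' + (p²(x²−1) − px − n²)y over the field K = ℚ(n,p). For every s ≥ 0, M(x^s) is a polynomial in x of degree exactly s+2 with leading coefficient p². Consequently, every polynomial of degree ≤ 2 in x lying in M(K[x]) is a K-scalar multiple of M(1) = p²x² − px − n² − p². -/

import Mathlib

open Polynomial

/-- The field `K = ℚ(n, p)` of rational functions in two indeterminates. -/
noncomputable abbrev Knp : Type := RatFunc (RatFunc ℚ)

/-- The indeterminate `n`. -/
noncomputable def nn : Knp := RatFunc.C RatFunc.X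

/-- The indeterminate `p`. -/
noncomputable def pp : Knp := RatFunc.X

/-- The operator `M(y) = (x²−1)y'' + (x − 2p(x²−1))y' + (p²(x²−1) − px − n²)y`
acting on `K[x]`. -/
noncomputable def Mnp (y : Knp[X]) : Knp[X] :=
  (X ^ 2 - 1) * derivative (derivative y) +
    (X - C (2 * pp) * (X ^ 2 - 1)) * derivative y +
    (C (pp ^ 2) * (X ^ 2 - 1) - C pp * X - C (nn ^ 2)) * y

lemma two_ne : (2 : Knp) ≠ 0 := by
  have h := RingHom.injective ((RatFunc.C : RatFunc ℚ →+* Knp).comp (RatFunc.C : ℚ →+* RatFunc ℚ))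
  intro h2
  have hh : ((RatFunc.C : RatFunc ℚ →+* Knp).comp RatFunc.C) 2 =
      ((RatFunc.C : RatFunc ℚ →+* Knp).comp RatFunc.C) 0 := by
    simp [h2]
  exact two_ne_zero (h hh)

lemma pp_ne_zero : pp ≠ 0 := RatFunc.X_ne_zero

lemma ppsq_ne_zero : pp ^ 2 ≠ 0 := pow_ne_zero _ pp_ne_zero

lemma f3_def : (C (pp ^ 2) * (X ^ 2 - 1) - C pp * X - C (nn ^ 2) : Knp[X]).degree = 2 ∧
    (C (pp ^ 2) * (X ^ 2 - 1) - C pp * X - C (nn ^ 2) : Knp[X]).leadingCoeff = pp ^ 2 := by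
  constructor
  · compute_degree!
    exact pp_ne_zero
  · have hd : (C (pp ^ 2) * (X ^ 2 - 1) - C pp * X - C (nn ^ 2) : Knp[X]).natDegree = 2 := by
      compute_degree!
      exact pp_ne_zero
    rw [leadingCoeff, hd]
    simp only [mul_sub, mul_one, coeff_sub, coeff_C_mul, coeff_X_pow, coeff_C, coeff_X]
    norm_num

lemma f2_deg : (X - C (2 * pp) * (X ^ 2 - 1) : Knp[X]).degree = 2 := by
  compute_degree!
  exact pp_ne_zero

lemma Mnp_key (y : Knp[X]) (hy : y ≠ 0) :
    (Mnp y).degree = (y.natDegree + 2 : ℕ) ∧ (Mnp y).leadingCoeff = pp ^ 2 * y.leadingCoeff := by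
  set d := y.natDegree with hd
  have hyd : y.degree = (d : WithBot ℕ) := degree_eq_natDegree hy
  have hy' : (derivative y).degree < (d : WithBot ℕ) := hyd ▸ degree_derivative_lt hy
  have hy'' : (derivative (derivative y)).degree < (d : WithBot ℕ) :=
    lt_of_le_of_lt (degree_derivative_le) hy'
  have hcast : ((d + 2 : ℕ) : WithBot ℕ) = 2 + (d : WithBot ℕ) := by push_cast; ring
  have h1 : ((X ^ 2 - 1 : Knp[X]) * derivative (derivative y)).degree < ((d + 2 : ℕ) : WithBot ℕ) := by
    rw [degree_mul, hcast]
    have hx : (X ^ 2 - 1 : Knp[X]).degree = 2 := by compute_degree!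
    rw [hx]
    exact WithBot.add_lt_add_left (by simp) hy''
  have h2 : ((X - C (2 * pp) * (X ^ 2 - 1) : Knp[X]) * derivative y).degree < ((d + 2 : ℕ) : WithBot ℕ) := by
    rw [degree_mul, hcast, f2_deg]
    exact WithBot.add_lt_add_left (by simp) hy'
  have h3 : ((C (pp ^ 2) * (X ^ 2 - 1) - C pp * X - C (nn ^ 2) : Knp[X]) * y).degree
      = ((d + 2 : ℕ) : WithBot ℕ) := by
    rw [degree_mul, hcast, f3_def.1, hyd]
  have h12 : ((X ^ 2 - 1 : Knp[X]) * derivative (derivative y) +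
      (X - C (2 * pp) * (X ^ 2 - 1)) * derivative y).degree < ((d + 2 : ℕ) : WithBot ℕ) :=
    lt_of_le_of_lt (degree_add_le _ _) (max_lt h1 h2)
  have hdeg : (Mnp y).degree = ((d + 2 : ℕ) : WithBot ℕ) := by
    rw [Mnp, degree_add_eq_right_of_degree_lt (by rw [h3]; exact h12), h3]
  refine ⟨hdeg, ?_⟩
  have := leadingCoeff_add_of_degree_lt (p := (X ^ 2 - 1 : Knp[X]) * derivative (derivative y) +
      (X - C (2 * pp) * (X ^ 2 - 1)) * derivative y)
      (q := (C (pp ^ 2) * (X ^ 2 - 1) - C pp * X - C (nn ^ 2) : Knp[X]) * y)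
      (by rw [h3]; exact h12)
  rw [Mnp, this, leadingCoeff_mul, f3_def.2]

/-- for every `s ≥ 0`, `M(x^s)` has degree exactly `s + 2` with leading
coefficient `p²`; consequently every polynomial of degree ≤ 2 lying in `M(K[x])` is a
`K`-scalar multiple of `M(1) = p²x² − px − n² − p²`. -/
theorem Mnp_degree_and_image :
    (∀ s : ℕ, (Mnp (X ^ s)).degree = (s + 2 : ℕ) ∧ (Mnp (X ^ s)).leadingCoeff = pp ^ 2) ∧
    (∀ q : Knp[X], q.degree ≤ 2 → (∃ y : Knp[X], Mnp y = q) →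
      ∃ c : Knp, q = c • (C (pp ^ 2) * X ^ 2 - C pp * X - C (nn ^ 2 + pp ^ 2))) := by

  have hC : ∀ c : Knp, Mnp (C c) = c • (C (pp ^ 2) * X ^ 2 - C pp * X - C (nn ^ 2 + pp ^ 2)) := by
    intro c
    simp only [Mnp, derivative_C, derivative_zero, smul_eq_C_mul, C_add, mul_zero, zero_mul, add_zero, zero_add]
    ring
  constructor
  · intro s
    have h := Mnp_key (X ^ s) (pow_ne_zero _ X_ne_zero)
    simpa using h
  · rintro q hq ⟨y, rfl⟩
    by_cases hy : y = 0
    · exact ⟨0, by simp [hy, Mnp]⟩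
    · have h := Mnp_key y hy
      have hdn : y.natDegree = 0 := by
        by_contra hne
        have h1 : 1 ≤ y.natDegree := Nat.one_le_iff_ne_zero.mpr hne
        have : ((y.natDegree + 2 : ℕ) : WithBot ℕ) ≤ 2 := h.1 ▸ hq
        have : (y.natDegree + 2 : ℕ) ≤ 2 := by exact_mod_cast this
        omega
      obtain ⟨c, rfl⟩ := natDegree_eq_zero.mp hdn
      exact ⟨c, hC c⟩
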